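/- Let R be a commutative ring and (a, b) a regular sequence in R. Then the affine chart of the blowup of Spec R along the ideal (a, b) where the first generator generates the pullback ideal is isomorphic to Spec R[t]/(t·a − b), and a ≡ 0, t·a ≡ b identifies its exceptional locus; moreover t·a − b is a nonzerodivisor in R[t], so this chart is a hypersurface in Spec R[t]. -/

import Mathlib

open Polynomial Pointwise

private lemma aux_nzd {R : Type*} [CommRing R] (a b : R) (ha : a ∈ nonZeroDivisors R) :
    (C a * X - C b) ∈ nonZeroDivisors (Polynomial R) := by
  rw [mem_nonZeroDivisors_iff_right]
  intro p hp
  have hco : ∀ k, p.coeff k * a - p.coeff (k + 1) * b = 0 := by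
    intro k
    have h := congrArg (fun q => Polynomial.coeff q (k + 1)) hp
    simpa [mul_sub, ← mul_assoc, coeff_sub, coeff_mul_X, coeff_mul_C] using h
  have hz : ∀ m, p.coeff (p.natDegree + 1 - m) = 0 := by
    intro m
    induction m with
    | zero => exact coeff_eq_zero_of_natDegree_lt (by omega)
    | succ m ih =>
      by_cases hm : p.natDegree + 1 ≤ m
      · rw [show p.natDegree + 1 - (m + 1) = p.natDegree + 1 - m by omega]; exact ih
      · have h1 : p.natDegree + 1 - (m + 1) + 1 = p.natDegree + 1 - m := by omega
        have h2 := hco (p.natDegree + 1 - (m + 1))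
        rw [h1, ih, zero_mul, sub_zero] at h2
        exact ha.2 _ h2
  ext k
  rw [coeff_zero]
  by_cases hk : k ≤ p.natDegree
  · have := hz (p.natDegree + 1 - k)
    rwa [show p.natDegree + 1 - (p.natDegree + 1 - k) = k by omega] at this
  · exact coeff_eq_zero_of_natDegree_lt (by omega)

private lemma aux_hom {R : Type*} [CommRing R] (a b : R) (ha : a ∈ nonZeroDivisors R)
    (hb' : ∀ x : R, x * b ∈ Ideal.span {a} → x ∈ Ideal.span {a}) :
    ∀ n (p : Polynomial R), p.natDegree ≤ n →
      (∑ i ∈ Finset.range (n + 1), p.coeff i * b ^ i * a ^ (n - i)) = 0 →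
      p ∈ Ideal.span {C a * X - C b} := by
  have hbn : ∀ (m : ℕ) (x : R), x * b ^ m ∈ Ideal.span {a} → x ∈ Ideal.span {a} := by
    intro m
    induction m with
    | zero => intro x hx; simpa using hx
    | succ m ih =>
      intro x hx
      exact hb' x (ih (x * b) (by rw [mul_assoc, ← pow_succ']; exact hx))
  intro n
  induction n with
  | zero =>
    intro p hdeg hsum
    have hsum' : p.coeff 0 = 0 := by simpa using hsum
    rw [eq_C_of_natDegree_le_zero hdeg, hsum', map_zero]
    exact Ideal.zero_mem _
  | succ n ih =>
    intro p hdeg hsum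
    -- leading coefficient divisible by a
    have h1 : p.coeff (n + 1) * b ^ (n + 1) ∈ Ideal.span {a} := by
      rw [Finset.sum_range_succ, Nat.sub_self, pow_zero, mul_one] at hsum
      have : p.coeff (n + 1) * b ^ (n + 1) =
          -∑ i ∈ Finset.range (n + 1), p.coeff i * b ^ i * a ^ (n + 1 - i) := by
        linear_combination hsum
      rw [this]
      refine neg_mem (Ideal.sum_mem _ fun i hi => ?_)
      rw [Ideal.mem_span_singleton]
      exact Dvd.dvd.mul_left
        (dvd_pow_self a (by simp only [Finset.mem_range] at hi; omega)) _
    obtain ⟨c, hc⟩ := Ideal.mem_span_singleton.mp (hbn (n + 1) _ h1)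
    set r : Polynomial R := C (a * c) * X ^ (n + 1) - C (b * c) * X ^ n with hr
    set q : Polynomial R := p - r with hq
    have hqc : ∀ k, q.coeff k = p.coeff k -
        ((a * c) * (if k = n + 1 then 1 else 0) - (b * c) * (if k = n then 1 else 0)) := by
      intro k
      simp only [hq, hr, coeff_sub, mul_assoc, coeff_C_mul, coeff_X_pow]
    have hq1 : q.natDegree ≤ n := by
      rw [natDegree_le_iff_coeff_eq_zero]
      intro m hm
      rcases eq_or_ne m (n + 1) with rfl | hne
      · rw [hqc, hc, if_pos rfl, if_neg (by omega : ¬ n + 1 = n)]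
        ring
      · have h3 : p.coeff m = 0 := coeff_eq_zero_of_natDegree_lt (by omega)
        rw [hqc, h3, if_neg hne, if_neg (by omega : ¬ m = n)]
        ring
    have hq2 : (∑ i ∈ Finset.range (n + 1), q.coeff i * b ^ i * a ^ (n - i)) = 0 := by
      apply ha.2
      have step1 : (∑ i ∈ Finset.range (n + 1), q.coeff i * b ^ i * a ^ (n - i)) * a =
          ∑ i ∈ Finset.range (n + 2), q.coeff i * b ^ i * a ^ (n + 1 - i) := by
        rw [Finset.sum_range_succ (n := n + 1), Finset.sum_mul]
        have hqn1 : q.coeff (n + 1) = 0 := coeff_eq_zero_of_natDegree_lt (by omega)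
        rw [hqn1, zero_mul, zero_mul, add_zero]
        refine Finset.sum_congr rfl fun i hi => ?_
        simp only [Finset.mem_range] at hi
        rw [mul_assoc, mul_comm (a ^ (n - i)) a, ← pow_succ',
          show n - i + 1 = n + 1 - i by omega, mul_assoc]
      rw [step1]
      have expand : ∀ i ∈ Finset.range (n + 2), q.coeff i * b ^ i * a ^ (n + 1 - i) =
          p.coeff i * b ^ i * a ^ (n + 1 - i)
            - (if i = n + 1 then (a * c) * (b ^ i * a ^ (n + 1 - i)) else 0)
            + (if i = n then (b * c) * (b ^ i * a ^ (n + 1 - i)) else 0) := by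
        intro i _
        rw [hqc]
        by_cases h1 : i = n + 1 <;> by_cases h2 : i = n <;> simp [h1, h2] <;> ring
      rw [Finset.sum_congr rfl expand, Finset.sum_add_distrib, Finset.sum_sub_distrib,
        hsum, Finset.sum_ite_eq' (Finset.range (n + 2)) (n + 1),
        Finset.sum_ite_eq' (Finset.range (n + 2)) n]
      simp only [Finset.mem_range, if_pos (by omega : n + 1 < n + 2),
        if_pos (by omega : n < n + 2), Nat.sub_self, pow_zero, mul_one,
        show n + 1 - n = 1 by omega, pow_one, zero_sub]
      ring
    have hq3 := ih q hq1 hq2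
    have hps : p = q + r := by rw [hq]; ring
    rw [hps]
    refine Ideal.add_mem _ hq3 ?_
    rw [Ideal.mem_span_singleton]
    refine ⟨C c * X ^ n, ?_⟩
    rw [hr]
    simp only [map_mul]
    ring

/-- For `(a, b)` a regular sequence in a commutative ring `R`, the blowup chart
`Spec R[t]/(t·a − b)` is a hypersurface: `t·a − b` is a nonzerodivisor in `R[t]`, and the
kernel of the natural map `R[t] → R_a`, `t ↦ b/a` (whose image is the chart `R[b/a]` of the
blowup of `Spec R` along `(a,b)` where the first generator generates the pullback ideal)
is exactly `(t·a − b)`. -/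
theorem stmt13 (R : Type*) [CommRing R] (a b : R)
    (hreg : RingTheory.Sequence.IsRegular R [a, b]) :
    (Polynomial.C a * Polynomial.X - Polynomial.C b) ∈ nonZeroDivisors (Polynomial R) ∧
      RingHom.ker (Polynomial.aeval
          (algebraMap R (Localization.Away a) b * IsLocalization.Away.invSelf a) :
          Polynomial R →ₐ[R] Localization.Away a).toRingHom =
        Ideal.span {Polynomial.C a * Polynomial.X - Polynomial.C b} := by
  rw [RingTheory.Sequence.isRegular_cons_iff] at hreg
  obtain ⟨ha, hrest⟩ := hreg
  rw [RingTheory.Sequence.isRegular_cons_iff] at hrest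
  obtain ⟨hb, -⟩ := hrest
  have ha' : a ∈ nonZeroDivisors R := by
    rw [mem_nonZeroDivisors_iff_right]
    intro x hx
    exact ha (by simpa [smul_eq_mul, mul_comm] using hx)
  have hmem : ∀ x : R, x ∈ (a • ⊤ : Submodule R R) ↔ x ∈ Ideal.span {a} := by
    intro x
    rw [← Submodule.ideal_span_singleton_smul, smul_eq_mul, Ideal.mul_top]
  have hb' : ∀ x : R, x * b ∈ Ideal.span {a} → x ∈ Ideal.span {a} := by
    intro x hx
    have : (Submodule.Quotient.mk x : QuotSMulTop a R) = 0 := by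
      apply hb
      show b • _ = b • (0 : QuotSMulTop a R)
      rw [smul_zero, ← Submodule.Quotient.mk_smul, Submodule.Quotient.mk_eq_zero]
      rwa [smul_eq_mul, mul_comm, hmem]
    rw [Submodule.Quotient.mk_eq_zero, hmem] at this
    exact this
  refine ⟨aux_nzd a b ha', ?_⟩
  set f : Localization.Away a :=
    algebraMap R (Localization.Away a) b * IsLocalization.Away.invSelf a with hf
  have hainv : algebraMap R (Localization.Away a) a * IsLocalization.Away.invSelf a = 1 :=
    IsLocalization.Away.mul_invSelf a
  apply le_antisymm
  · -- ker ⊆ span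
    intro p hp
    rw [RingHom.mem_ker] at hp
    set n := p.natDegree with hn
    set F := ∑ i ∈ Finset.range (n + 1), p.coeff i * b ^ i * a ^ (n - i) with hF
    have hF0 : algebraMap R (Localization.Away a) F = 0 := by
      have hev : (Polynomial.aeval f p : Localization.Away a) =
          ∑ i ∈ Finset.range (n + 1), p.coeff i • f ^ i := aeval_eq_sum_range f
      have key : algebraMap R (Localization.Away a) F =
          algebraMap R (Localization.Away a) a ^ n * Polynomial.aeval f p := by
        rw [hev, Finset.mul_sum, hF, map_sum]
        refine Finset.sum_congr rfl fun i hi => ?_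
        simp only [Finset.mem_range] at hi
        have hsplit : algebraMap R (Localization.Away a) a ^ n =
            algebraMap R (Localization.Away a) a ^ (n - i) *
              algebraMap R (Localization.Away a) a ^ i := by
          rw [← pow_add]; congr 1; omega
        have h2 : algebraMap R (Localization.Away a) a ^ i *
            IsLocalization.Away.invSelf a ^ i = 1 := by
          rw [← mul_pow, hainv, one_pow]
        rw [map_mul, map_mul, map_pow, map_pow, Algebra.smul_def, hf, mul_pow, hsplit]
        linear_combination (-(algebraMap R (Localization.Away a) a ^ (n - i) *
          algebraMap R (Localization.Away a) (p.coeff i) *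
          algebraMap R (Localization.Away a) b ^ i)) * h2
      have hp' : (Polynomial.aeval f) p = 0 := hp
      rw [key, hp', mul_zero]
    have hinj : Function.Injective (algebraMap R (Localization.Away a)) := by
      apply IsLocalization.injective (M := Submonoid.powers a)
      intro x hx
      obtain ⟨k, rfl⟩ := hx
      exact pow_mem ha' k
    have hFz : F = 0 := hinj (by simpa using hF0)
    exact aux_hom a b ha' hb' n p le_rfl hFz
  · -- span ⊆ ker
    rw [Ideal.span_le, Set.singleton_subset_iff]
    show _ ∈ RingHom.ker _
    rw [RingHom.mem_ker]
    simp only [AlgHom.toRingHom_eq_coe, RingHom.coe_coe, map_sub, map_mul, aeval_X, aeval_C]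
    rw [hf]
    linear_combination (algebraMap R (Localization.Away a) b) * hainv
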